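/- Second-order solvability condition yielding the characteristic-value correction β = 1/(2(g²−1)): let g be a real number with g ∉ {1, −1, 2, −2}. Define p(α) := −cos((g+2)α)/(4(g+1)) + cos((g−2)α)/(4(g−1)) and p₁(α) := cos((g+4)α)/(32(g+1)(g+2)) + cos((g−4)α)/(32(g−1)(g−2)). Then for every real α: p₁''(α) + g²·p₁(α) − 2·cos(2α)·p(α) + cos(gα)/(2(g²−1)) = 0. -/

import Mathlib

open Real

/-- The first-order correction `p` in Mathieu's expansion of the even periodic
solution `P₂ = cos gα + h²p + h⁴p₁ + ⋯`. -/
noncomputable def mathieuCorrectionP (g : ℝ) (α : ℝ) : ℝ :=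
  -Real.cos ((g + 2) * α) / (4 * (g + 1)) + Real.cos ((g - 2) * α) / (4 * (g - 1))

/-- The second-order correction `p₁` in Mathieu's expansion of the even periodic
solution `P₂ = cos gα + h²p + h⁴p₁ + ⋯`. -/
noncomputable def mathieuCorrectionP1 (g : ℝ) (α : ℝ) : ℝ :=
  Real.cos ((g + 4) * α) / (32 * (g + 1) * (g + 2)) +
    Real.cos ((g - 4) * α) / (32 * (g - 1) * (g - 2))

lemma cosLin_hasDerivAt (k α : ℝ) :
    HasDerivAt (fun x : ℝ => Real.cos (k * x)) (-(k * Real.sin (k * α))) α := by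
  have h := (Real.hasDerivAt_cos (k * α)).comp α ((hasDerivAt_id α).const_mul k)
  simpa [mul_comm, Function.comp_def] using h

lemma sinLin_hasDerivAt (k α : ℝ) :
    HasDerivAt (fun x : ℝ => Real.sin (k * x)) (k * Real.cos (k * α)) α := by
  have h := (Real.hasDerivAt_sin (k * α)).comp α ((hasDerivAt_id α).const_mul k)
  simpa [mul_comm, Function.comp_def] using h

lemma p1_deriv (g : ℝ) :
    deriv (mathieuCorrectionP1 g) = fun α =>
      -((g + 4) * Real.sin ((g + 4) * α)) / (32 * (g + 1) * (g + 2)) +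
        -((g - 4) * Real.sin ((g - 4) * α)) / (32 * (g - 1) * (g - 2)) := by
  funext α
  have h : HasDerivAt (mathieuCorrectionP1 g)
      (-((g + 4) * Real.sin ((g + 4) * α)) / (32 * (g + 1) * (g + 2)) +
        -((g - 4) * Real.sin ((g - 4) * α)) / (32 * (g - 1) * (g - 2))) α := by
    exact ((cosLin_hasDerivAt (g + 4) α).div_const _).add
      ((cosLin_hasDerivAt (g - 4) α).div_const _)
  exact h.deriv

/-- second-order solvability condition yielding the
characteristic-value correction `β = 1/(2(g²−1))`. -/
theorem mathieu_second_order_solvability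
    (g : ℝ) (hg1 : g ≠ 1) (hg2 : g ≠ -1) (hg3 : g ≠ 2) (hg4 : g ≠ -2) :
    ∀ α : ℝ,
      deriv (deriv (mathieuCorrectionP1 g)) α + g ^ 2 * mathieuCorrectionP1 g α -
          2 * Real.cos (2 * α) * mathieuCorrectionP g α +
          Real.cos (g * α) / (2 * (g ^ 2 - 1)) = 0 := by
  intro α
  have hd2 : deriv (deriv (mathieuCorrectionP1 g)) α =
      -((g + 4) * ((g + 4) * Real.cos ((g + 4) * α))) / (32 * (g + 1) * (g + 2)) +
        -((g - 4) * ((g - 4) * Real.cos ((g - 4) * α))) / (32 * (g - 1) * (g - 2)) := by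
    rw [p1_deriv]
    have h : HasDerivAt (fun α =>
        -((g + 4) * Real.sin ((g + 4) * α)) / (32 * (g + 1) * (g + 2)) +
          -((g - 4) * Real.sin ((g - 4) * α)) / (32 * (g - 1) * (g - 2)))
        (-((g + 4) * ((g + 4) * Real.cos ((g + 4) * α))) / (32 * (g + 1) * (g + 2)) +
          -((g - 4) * ((g - 4) * Real.cos ((g - 4) * α))) / (32 * (g - 1) * (g - 2))) α := by
      have h1 := (((sinLin_hasDerivAt (g + 4) α).const_mul (g + 4)).neg).div_const
        (32 * (g + 1) * (g + 2))
      have h2 := (((sinLin_hasDerivAt (g - 4) α).const_mul (g - 4)).neg).div_const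
        (32 * (g - 1) * (g - 2))
      exact (h1.add h2)
    exact h.deriv
  have k1 : Real.cos (2 * α) * Real.cos ((g + 2) * α) =
      (Real.cos ((g + 4) * α) + Real.cos (g * α)) / 2 := by
    rw [show (g + 4) * α = (g + 2) * α + 2 * α by ring,
      show g * α = (g + 2) * α - 2 * α by ring, Real.cos_add, Real.cos_sub]
    ring
  have k2 : Real.cos (2 * α) * Real.cos ((g - 2) * α) =
      (Real.cos (g * α) + Real.cos ((g - 4) * α)) / 2 := by
    rw [show g * α = (g - 2) * α + 2 * α by ring,
      show (g - 4) * α = (g - 2) * α - 2 * α by ring, Real.cos_add, Real.cos_sub]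
    ring
  rw [hd2]
  unfold mathieuCorrectionP mathieuCorrectionP1
  have e1 : g + 1 ≠ 0 := by intro h; apply hg2; linarith
  have e2 : g - 1 ≠ 0 := by intro h; apply hg1; linarith
  have e3 : g + 2 ≠ 0 := by intro h; apply hg4; linarith
  have e4 : g - 2 ≠ 0 := by intro h; apply hg3; linarith
  have e5 : g ^ 2 - 1 ≠ 0 := by
    intro h
    have : (g - 1) * (g + 1) = 0 := by ring_nf; linarith [h]
    rcases mul_eq_zero.1 this with h' | h' <;> [exact e2 h'; exact e1 h']
  have r1 : Real.cos ((g + 4) * α) =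
      2 * Real.cos (2 * α) * Real.cos ((g + 2) * α) - Real.cos (g * α) := by linarith [k1]
  have r2 : Real.cos ((g - 4) * α) =
      2 * Real.cos (2 * α) * Real.cos ((g - 2) * α) - Real.cos (g * α) := by linarith [k2]
  rw [r1, r2]
  field_simp
  ring
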